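/- Let C_{Γ(LV,2,1)} be the class of all Kripke models whose frame consists of a root x and two disjoint two-element sets C0 and C1 not containing x, where the accessibility relation R is the reflexive relation with C0×C0 ⊆ R, C1×C1 ⊆ R, x R y for every world y, and no other pairs (a root below exactly two clusters, each consisting of exactly two final worlds). Then C_{Γ(LV,2,1)} enjoys 3-IP. -/

import Mathlib

/-- Modal formulas over countably many variables. -/
inductive ModalForm : Type where
  | var : ℕ → ModalForm
  | bot : ModalForm
  | and : ModalForm → ModalForm → ModalForm
  | or : ModalForm → ModalForm → ModalForm
  | not : ModalForm → ModalForm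
  | imp : ModalForm → ModalForm → ModalForm
  | box : ModalForm → ModalForm

namespace ModalForm

mutual
  /-- positively occurring variables -/
  def vpos : ModalForm → Finset ℕ
    | var p => {p}
    | bot => ∅
    | and φ ψ => vpos φ ∪ vpos ψ
    | or φ ψ => vpos φ ∪ vpos ψ
    | not φ => vneg φ
    | imp φ ψ => vneg φ ∪ vpos ψ
    | box φ => vpos φ
  /-- negatively occurring variables -/
  def vneg : ModalForm → Finset ℕ
    | var _ => ∅
    | bot => ∅
    | and φ ψ => vneg φ ∪ vneg ψ
    | or φ ψ => vneg φ ∪ vneg ψ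
    | not φ => vpos φ
    | imp φ ψ => vpos φ ∪ vneg ψ
    | box φ => vneg φ
end

/-- Modal depth: maximal nesting of `□`. -/
def depth : ModalForm → ℕ
  | var _ => 0
  | bot => 0
  | and φ ψ => max (depth φ) (depth ψ)
  | or φ ψ => max (depth φ) (depth ψ)
  | not φ => depth φ
  | imp φ ψ => max (depth φ) (depth ψ)
  | box φ => depth φ + 1

/-- `◇φ := ¬□¬φ` -/
def dia (φ : ModalForm) : ModalForm := not (box (not φ))

/-- `⊤ := ¬⊥` -/
def top : ModalForm := not bot

end ModalForm

/-- An S4 Kripke frame: nonempty set of worlds with a reflexive transitive relation. -/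
structure KFrame : Type 1 where
  W : Type
  R : W → W → Prop
  nonempty : Nonempty W
  refl : ∀ x, R x x
  trans : ∀ x y z, R x y → R y z → R x z

/-- A Kripke model: a frame with a valuation. -/
structure KModel : Type 1 extends KFrame where
  val : W → ℕ → Prop

/-- The model based on frame `F` with valuation `V`. -/
def KFrame.toModel (F : KFrame) (V : F.W → ℕ → Prop) : KModel :=
  { toKFrame := F, val := V }

/-- Satisfaction in a Kripke model. -/
def KModel.Sat (M : KModel) : M.W → ModalForm → Prop
  | w, .var p => M.val w p
  | _, .bot => False
  | w, .and φ ψ => M.Sat w φ ∧ M.Sat w ψ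
  | w, .or φ ψ => M.Sat w φ ∨ M.Sat w ψ
  | w, .not φ => ¬ M.Sat w φ
  | w, .imp φ ψ => M.Sat w φ → M.Sat w ψ
  | w, .box φ => ∀ y, M.R w y → M.Sat y φ

/-- `(M0,w0) →ₙ^{(P⁺,P⁻)} (M1,w1)`: every `(P⁺,P⁻)`-formula of depth ≤ n
satisfied at `(M0,w0)` is satisfied at `(M1,w1)`. -/
def ModalArrow (Pp Pm : Finset ℕ) (n : ℕ) (M0 : KModel) (w0 : M0.W)
    (M1 : KModel) (w1 : M1.W) : Prop :=
  ∀ φ : ModalForm, φ.vpos ⊆ Pp → φ.vneg ⊆ Pm → φ.depth ≤ n →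
    M0.Sat w0 φ → M1.Sat w1 φ

/-- p-morphism between frames. -/
def PMorphism (F G : KFrame) (f : F.W → G.W) : Prop :=
  (∀ x y, F.R x y → G.R (f x) (f y)) ∧
  (∀ x w, G.R (f x) w → ∃ z, F.R x z ∧ f z = w)

/-- The class `C` of Kripke models enjoys `n`-IP. -/
def EnjoysIP (C : Set KModel) (n : ℕ) : Prop :=
  ∀ (Pp Pm : Finset ℕ) (M0 M1 : KModel), M0 ∈ C → M1 ∈ C →
    ∀ (w0 : M0.W) (w1 : M1.W), ModalArrow Pp Pm n M0 w0 M1 w1 →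
      ∃ (F : KFrame) (wstar : F.W) (f0 : F.W → M0.W) (f1 : F.W → M1.W),
        (∀ V : F.W → ℕ → Prop, F.toModel V ∈ C) ∧
        PMorphism F M0.toKFrame f0 ∧
        PMorphism F M1.toKFrame f1 ∧
        f0 wstar = w0 ∧ f1 wstar = w1 ∧
        ∀ x : F.W, ModalArrow Pp Pm 0 M0 (f0 x) M1 (f1 x)

/-- A world is final iff every successor is also a predecessor. -/
def KModel.Final (M : KModel) (w : M.W) : Prop := ∀ y, M.R w y → M.R y w

/-- The cluster of a world. -/
def KModel.cluster (M : KModel) (w : M.W) : Set M.W := {u | M.R w u ∧ M.R u w}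

/-- Cluster `C0` of `M0` matches cluster `C1` of `M1`. -/
def Matches (Pp Pm : Finset ℕ) (M0 M1 : KModel) (C0 : Set M0.W) (C1 : Set M1.W) : Prop :=
  (∀ u0 ∈ C0, ∃ u1 ∈ C1, ModalArrow Pp Pm 0 M0 u0 M1 u1) ∧
  (∀ u1 ∈ C1, ∃ u0 ∈ C0, ModalArrow Pp Pm 0 M0 u0 M1 u1)

/-- `φ` is satisfied at every world of every model in `C`. -/
def ValidOn (C : Set KModel) (φ : ModalForm) : Prop :=
  ∀ M ∈ C, ∀ w : M.W, M.Sat w φ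

/-- A set with exactly two elements. -/
def TwoElem {α : Type} (C : Set α) : Prop := ∃ a b : α, a ≠ b ∧ C = {a, b}

/-- The class of Γ(LV,2,1) models: a root below exactly two clusters,
each consisting of exactly two final worlds. -/
def C_LV21 : Set KModel :=
  {M | ∃ (x : M.W) (C0 C1 : Set M.W), x ∉ C0 ∧ x ∉ C1 ∧ Disjoint C0 C1 ∧
    TwoElem C0 ∧ TwoElem C1 ∧
    (∀ w : M.W, w = x ∨ w ∈ C0 ∨ w ∈ C1) ∧
    ∀ u v : M.W, M.R u v ↔
      (u = v ∨ (u ∈ C0 ∧ v ∈ C0) ∨ (u ∈ C1 ∧ v ∈ C1) ∨ u = x)}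

attribute [local instance] Classical.propDecidable

open ModalForm

/-- Conjunction of a list of formulas. -/
def conjL (l : List ModalForm) : ModalForm := l.foldr .and .top

lemma sat_conjL (M : KModel) (w : M.W) (l : List ModalForm) :
    M.Sat w (conjL l) ↔ ∀ φ ∈ l, M.Sat w φ := by
  induction l with
  | nil => simp [conjL, KModel.Sat, ModalForm.top]
  | cons a l ih => simp [conjL, KModel.Sat] at ih ⊢; tauto

lemma vpos_conjL (l : List ModalForm) (P : Finset ℕ) (h : ∀ φ ∈ l, φ.vpos ⊆ P) :
    (conjL l).vpos ⊆ P := by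
  induction l with
  | nil => simp [conjL, ModalForm.top, ModalForm.vpos, ModalForm.vneg]
  | cons a l ih =>
    simp only [conjL, List.foldr, ModalForm.vpos] at ih ⊢
    exact Finset.union_subset (h a (by simp)) (ih fun φ hφ => h φ (by simp [hφ]))

lemma vneg_conjL (l : List ModalForm) (P : Finset ℕ) (h : ∀ φ ∈ l, φ.vneg ⊆ P) :
    (conjL l).vneg ⊆ P := by
  induction l with
  | nil => simp [conjL, ModalForm.top, ModalForm.vpos, ModalForm.vneg]
  | cons a l ih =>
    simp only [conjL, List.foldr, ModalForm.vneg] at ih ⊢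
    exact Finset.union_subset (h a (by simp)) (ih fun φ hφ => h φ (by simp [hφ]))

lemma depth_conjL (l : List ModalForm) (h : ∀ φ ∈ l, φ.depth = 0) :
    (conjL l).depth = 0 := by
  induction l with
  | nil => simp [conjL, ModalForm.top, ModalForm.depth]
  | cons a l ih =>
    simp only [conjL, List.foldr, ModalForm.depth] at ih ⊢
    simp [h a (by simp), ih fun φ hφ => h φ (by simp [hφ])]
/-- depth-0 directed relation -/
def Lle (Pp Pm : Finset ℕ) (M0 M1 : KModel) (u : M0.W) (v : M1.W) : Prop :=
  (∀ p ∈ Pp, M0.val u p → M1.val v p) ∧ (∀ p ∈ Pm, M1.val v p → M0.val u p)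

/-- characteristic depth-0 formula of `v` (negative polarity version) -/
noncomputable def chib (Pp Pm : Finset ℕ) (M1 : KModel) (v : M1.W) : ModalForm :=
  conjL ((Pm.toList.filter (fun p => decide (M1.val v p))).map .var ++
    (Pp.toList.filter (fun p => decide (¬ M1.val v p))).map (fun p => .not (.var p)))

lemma sat_chib (Pp Pm : Finset ℕ) (M1 : KModel) (v : M1.W) (N : KModel) (w : N.W) :
    N.Sat w (chib Pp Pm M1 v) ↔
      ((∀ p ∈ Pm, M1.val v p → N.val w p) ∧ (∀ p ∈ Pp, ¬ M1.val v p → ¬ N.val w p)) := by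
  rw [chib, sat_conjL]
  constructor
  · intro h
    constructor
    · intro p hp hvp
      have := h (.var p) (by
        simp only [List.mem_append, List.mem_map, List.mem_filter]
        exact Or.inl ⟨p, ⟨by simp [hp], by simp [hvp]⟩, rfl⟩)
      simpa [KModel.Sat] using this
    · intro p hp hvp
      have := h (.not (.var p)) (by
        simp only [List.mem_append, List.mem_map, List.mem_filter]
        exact Or.inr ⟨p, ⟨by simp [hp], by simp [hvp]⟩, rfl⟩)
      simpa [KModel.Sat] using this
  · rintro ⟨h1, h2⟩ φ hφ
    simp only [List.mem_append, List.mem_map, List.mem_filter] at hφ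
    rcases hφ with ⟨p, ⟨hp, hvp⟩, rfl⟩ | ⟨p, ⟨hp, hvp⟩, rfl⟩
    · simp only [decide_eq_true_iff] at hvp
      exact h1 p (by simpa using hp) hvp
    · simp only [decide_eq_true_iff] at hvp
      simp only [KModel.Sat]
      exact h2 p (by simpa using hp) hvp

lemma sat_chib_self (Pp Pm : Finset ℕ) (M1 : KModel) (v : M1.W) :
    M1.Sat v (chib Pp Pm M1 v) := by
  rw [sat_chib]; exact ⟨fun _ _ h => h, fun _ _ h => h⟩

lemma lle_of_sat_chib (Pp Pm : Finset ℕ) (M0 M1 : KModel) (u : M0.W) (v : M1.W)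
    (h : M0.Sat u (chib Pp Pm M1 v)) : Lle Pp Pm M0 M1 u v := by
  rw [sat_chib] at h
  exact ⟨fun p hp hup => by_contra fun hvp => h.2 p hp hvp hup, fun p hp => h.1 p hp⟩

lemma vpos_chib (Pp Pm : Finset ℕ) (M1 : KModel) (v : M1.W) :
    (chib Pp Pm M1 v).vpos ⊆ Pm := by
  apply vpos_conjL
  intro φ hφ
  simp only [List.mem_append, List.mem_map, List.mem_filter] at hφ
  rcases hφ with ⟨p, ⟨hp, _⟩, rfl⟩ | ⟨p, ⟨hp, _⟩, rfl⟩ <;>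
    simp_all [ModalForm.vpos, ModalForm.vneg, Finset.singleton_subset_iff]

lemma vneg_chib (Pp Pm : Finset ℕ) (M1 : KModel) (v : M1.W) :
    (chib Pp Pm M1 v).vneg ⊆ Pp := by
  apply vneg_conjL
  intro φ hφ
  simp only [List.mem_append, List.mem_map, List.mem_filter] at hφ
  rcases hφ with ⟨p, ⟨hp, _⟩, rfl⟩ | ⟨p, ⟨hp, _⟩, rfl⟩ <;>
    simp_all [ModalForm.vpos, ModalForm.vneg, Finset.singleton_subset_iff]

lemma depth_chib (Pp Pm : Finset ℕ) (M1 : KModel) (v : M1.W) :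
    (chib Pp Pm M1 v).depth = 0 := by
  apply depth_conjL
  intro φ hφ
  simp only [List.mem_append, List.mem_map, List.mem_filter] at hφ
  rcases hφ with ⟨p, _, rfl⟩ | ⟨p, _, rfl⟩ <;> simp [ModalForm.depth]
/-- world-characterizing formula pushing `Lle` facts forward -/
noncomputable def theta (Pp Pm : Finset ℕ) (M0 M1 : KModel) (ws : List M1.W)
    (u : M0.W) : ModalForm :=
  conjL (ws.map fun v =>
    if Lle Pp Pm M0 M1 u v then .top else .not (chib Pp Pm M1 v))

lemma sat_theta_self (Pp Pm : Finset ℕ) (M0 M1 : KModel) (ws : List M1.W) (u : M0.W) :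
    M0.Sat u (theta Pp Pm M0 M1 ws u) := by
  rw [theta, sat_conjL]
  intro φ hφ
  simp only [List.mem_map] at hφ
  obtain ⟨v, _, rfl⟩ := hφ
  by_cases h : Lle Pp Pm M0 M1 u v
  · simp [h, KModel.Sat, ModalForm.top]
  · simp only [h, if_false, KModel.Sat]
    exact fun hs => h (lle_of_sat_chib _ _ _ _ _ _ hs)

lemma lle_of_sat_theta (Pp Pm : Finset ℕ) (M0 M1 : KModel) (ws : List M1.W)
    (u : M0.W) (v : M1.W) (hv : v ∈ ws)
    (h : M1.Sat v (theta Pp Pm M0 M1 ws u)) : Lle Pp Pm M0 M1 u v := by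
  by_contra hc
  rw [theta, sat_conjL] at h
  have := h (.not (chib Pp Pm M1 v)) (by
    simp only [List.mem_map]
    exact ⟨v, hv, by simp [hc]⟩)
  exact this (sat_chib_self _ _ _ _)

lemma vpos_theta (Pp Pm : Finset ℕ) (M0 M1 : KModel) (ws : List M1.W) (u : M0.W) :
    (theta Pp Pm M0 M1 ws u).vpos ⊆ Pp := by
  apply vpos_conjL
  intro φ hφ
  simp only [List.mem_map] at hφ
  obtain ⟨v, _, rfl⟩ := hφ
  by_cases h : Lle Pp Pm M0 M1 u v <;>
    simp [h, ModalForm.top, ModalForm.vpos, ModalForm.vneg, vneg_chib]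

lemma vneg_theta (Pp Pm : Finset ℕ) (M0 M1 : KModel) (ws : List M1.W) (u : M0.W) :
    (theta Pp Pm M0 M1 ws u).vneg ⊆ Pm := by
  apply vneg_conjL
  intro φ hφ
  simp only [List.mem_map] at hφ
  obtain ⟨v, _, rfl⟩ := hφ
  by_cases h : Lle Pp Pm M0 M1 u v <;>
    simp [h, ModalForm.top, ModalForm.vpos, ModalForm.vneg, vpos_chib]

lemma depth_theta (Pp Pm : Finset ℕ) (M0 M1 : KModel) (ws : List M1.W) (u : M0.W) :
    (theta Pp Pm M0 M1 ws u).depth = 0 := by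
  apply depth_conjL
  intro φ hφ
  simp only [List.mem_map] at hφ
  obtain ⟨v, _, rfl⟩ := hφ
  by_cases h : Lle Pp Pm M0 M1 u v <;>
    simp [h, ModalForm.top, ModalForm.depth, depth_chib]

/-- `Lle` implies the depth-0 modal arrow. -/
lemma modalArrow_of_lle (Pp Pm : Finset ℕ) (M0 M1 : KModel) (u : M0.W) (v : M1.W)
    (h : Lle Pp Pm M0 M1 u v) : ModalArrow Pp Pm 0 M0 u M1 v := by
  have key : ∀ φ : ModalForm, φ.depth ≤ 0 →
      ((φ.vpos ⊆ Pp → φ.vneg ⊆ Pm → M0.Sat u φ → M1.Sat v φ) ∧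
       (φ.vpos ⊆ Pm → φ.vneg ⊆ Pp → M1.Sat v φ → M0.Sat u φ)) := by
    intro φ
    induction φ with
    | var p =>
      intro _
      constructor
      · intro h1 _ hs
        exact h.1 p (h1 (by simp [ModalForm.vpos])) hs
      · intro h1 _ hs
        exact h.2 p (h1 (by simp [ModalForm.vpos])) hs
    | bot => intro _; simp [KModel.Sat]
    | and φ ψ ihφ ihψ =>
      intro hd
      simp only [ModalForm.depth, Nat.max_le] at hd
      simp only [ModalForm.vpos, ModalForm.vneg, Finset.union_subset_iff, KModel.Sat]
      have iφ := ihφ hd.1; have iψ := ihψ hd.2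
      exact ⟨fun h1 h2 hs => ⟨iφ.1 h1.1 h2.1 hs.1, iψ.1 h1.2 h2.2 hs.2⟩,
             fun h1 h2 hs => ⟨iφ.2 h1.1 h2.1 hs.1, iψ.2 h1.2 h2.2 hs.2⟩⟩
    | or φ ψ ihφ ihψ =>
      intro hd
      simp only [ModalForm.depth, Nat.max_le] at hd
      simp only [ModalForm.vpos, ModalForm.vneg, Finset.union_subset_iff, KModel.Sat]
      have iφ := ihφ hd.1; have iψ := ihψ hd.2
      exact ⟨fun h1 h2 hs => hs.imp (iφ.1 h1.1 h2.1) (iψ.1 h1.2 h2.2),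
             fun h1 h2 hs => hs.imp (iφ.2 h1.1 h2.1) (iψ.2 h1.2 h2.2)⟩
    | not φ ihφ =>
      intro hd
      simp only [ModalForm.depth] at hd
      simp only [ModalForm.vpos, ModalForm.vneg, KModel.Sat]
      obtain iφ := ihφ hd
      exact ⟨fun h1 h2 hs hc => hs (iφ.2 h2 h1 hc),
             fun h1 h2 hs hc => hs (iφ.1 h2 h1 hc)⟩
    | imp φ ψ ihφ ihψ =>
      intro hd
      simp only [ModalForm.depth, Nat.max_le] at hd
      simp only [ModalForm.vpos, ModalForm.vneg, Finset.union_subset_iff, KModel.Sat]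
      have iφ := ihφ hd.1; have iψ := ihψ hd.2
      exact ⟨fun h1 h2 hs hc => iψ.1 h1.2 h2.2 (hs (iφ.2 h2.1 h1.1 hc)),
             fun h1 h2 hs hc => iψ.2 h1.2 h2.2 (hs (iφ.1 h2.1 h1.1 hc))⟩
    | box φ _ =>
      intro hd
      simp [ModalForm.depth] at hd
  exact fun φ h1 h2 h3 => (key φ h3).1 h1 h2
/-- the canonical 5-world frame: root 0, clusters {1,2} and {3,4} -/
abbrev F5 : KFrame where
  W := Fin 5
  R := fun i j => i = j ∨ ((i = 1 ∨ i = 2) ∧ (j = 1 ∨ j = 2)) ∨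
    ((i = 3 ∨ i = 4) ∧ (j = 3 ∨ j = 4)) ∨ i = 0
  nonempty := ⟨0⟩
  refl := by decide
  trans := by decide

lemma F5_mem (V : F5.W → ℕ → Prop) : F5.toModel V ∈ C_LV21 := by
  show (KModel.mk F5 V) ∈ C_LV21
  refine ⟨(0 : Fin 5), ({1, 2} : Set (Fin 5)), ({3, 4} : Set (Fin 5)), ?_, ?_, ?_, ?_, ?_, ?_, ?_⟩
  · exact (by decide : (0 : Fin 5) ∉ ({1, 2} : Set (Fin 5)))
  · exact (by decide : (0 : Fin 5) ∉ ({3, 4} : Set (Fin 5)))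
  · exact (by rw [Set.disjoint_left]; decide :
      Disjoint ({1, 2} : Set (Fin 5)) ({3, 4} : Set (Fin 5)))
  · exact ⟨(1 : Fin 5), (2 : Fin 5), (by decide : (1 : Fin 5) ≠ 2), rfl⟩
  · exact ⟨(3 : Fin 5), (4 : Fin 5), (by decide : (3 : Fin 5) ≠ 4), rfl⟩
  · exact (by decide : ∀ w : Fin 5,
      w = 0 ∨ w ∈ ({1, 2} : Set (Fin 5)) ∨ w ∈ ({3, 4} : Set (Fin 5)))
  · exact (by decide : ∀ u v : Fin 5, F5.R u v ↔
      (u = v ∨ (u ∈ ({1, 2} : Set (Fin 5)) ∧ v ∈ ({1, 2} : Set (Fin 5))) ∨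
        (u ∈ ({3, 4} : Set (Fin 5)) ∧ v ∈ ({3, 4} : Set (Fin 5))) ∨ u = 0))

def vec5 {α : Type} (a b c d e : α) : Fin 5 → α
  | 0 => a
  | 1 => b
  | 2 => c
  | 3 => d
  | 4 => e

/-- facts describing a 2-cluster -/
def ClFacts (M : KModel) (p1 p2 : M.W) : Prop :=
  M.R p1 p2 ∧ M.R p2 p1 ∧ (∀ w, M.R p1 w → w = p1 ∨ w = p2) ∧
    (∀ w, M.R p2 w → w = p1 ∨ w = p2)

lemma clFacts_swap (M : KModel) (p1 p2 : M.W) (h : ClFacts M p1 p2) : ClFacts M p2 p1 := by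
  obtain ⟨h1, h2, h3, h4⟩ := h
  exact ⟨h2, h1, fun w hw => (h4 w hw).symm, fun w hw => (h3 w hw).symm⟩

/-- facts describing the root slot -/
def RootFacts (M : KModel) (r p1 p2 q1 q2 : M.W) : Prop :=
  M.R r p1 ∧ M.R r p2 ∧ M.R r q1 ∧ M.R r q2 ∧
    ∀ w, M.R r w → w = r ∨ w = p1 ∨ w = p2 ∨ w = q1 ∨ w = q2

/-- builds a p-morphism from F5 -/
lemma pmorph5 (M : KModel) (r p1 p2 q1 q2 : M.W)
    (h1 : RootFacts M r p1 p2 q1 q2) (h2 : ClFacts M p1 p2) (h3 : ClFacts M q1 q2) :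
    PMorphism F5 M.toKFrame (vec5 r p1 p2 q1 q2) := by
  obtain ⟨hrp1, hrp2, hrq1, hrq2, hrs⟩ := h1
  obtain ⟨hp12, hp21, hp1s, hp2s⟩ := h2
  obtain ⟨hq12, hq21, hq1s, hq2s⟩ := h3
  have hr : ∀ i, M.R r (vec5 r p1 p2 q1 q2 i) := by
    intro i
    fin_cases i
    exacts [M.refl r, hrp1, hrp2, hrq1, hrq2]
  constructor
  · intro i j hij
    fin_cases i <;> fin_cases j <;>
      first
        | exact absurd hij (by decide)
        | exact M.refl _
        | exact hr 0 | exact hr 1 | exact hr 2 | exact hr 3 | exact hr 4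
        | exact hp12 | exact hp21 | exact hq12 | exact hq21
  · intro i w hw
    fin_cases i
    · rcases hrs w hw with rfl | rfl | rfl | rfl | rfl
      · exact ⟨0, by decide, rfl⟩
      · exact ⟨1, by decide, rfl⟩
      · exact ⟨2, by decide, rfl⟩
      · exact ⟨3, by decide, rfl⟩
      · exact ⟨4, by decide, rfl⟩
    · rcases hp1s w hw with rfl | rfl
      · exact ⟨1, by decide, rfl⟩
      · exact ⟨2, by decide, rfl⟩
    · rcases hp2s w hw with rfl | rfl
      · exact ⟨1, by decide, rfl⟩
      · exact ⟨2, by decide, rfl⟩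
    · rcases hq1s w hw with rfl | rfl
      · exact ⟨3, by decide, rfl⟩
      · exact ⟨4, by decide, rfl⟩
    · rcases hq2s w hw with rfl | rfl
      · exact ⟨3, by decide, rfl⟩
      · exact ⟨4, by decide, rfl⟩

/-- 2x2 matching lemma -/
lemma two_two {P11 P12 P21 P22 : Prop} (h1 : P11 ∨ P12) (h2 : P21 ∨ P22)
    (h3 : P11 ∨ P21) (h4 : P12 ∨ P22) : (P11 ∧ P22) ∨ (P12 ∧ P21) := by tauto
/-- pointwise-matching of two 2-clusters -/
def Match2 (Pp Pm : Finset ℕ) (M0 M1 : KModel) (u1 u2 : M0.W) (g1 g2 : M1.W) : Prop :=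
  (Lle Pp Pm M0 M1 u1 g1 ∧ Lle Pp Pm M0 M1 u2 g2) ∨
  (Lle Pp Pm M0 M1 u1 g2 ∧ Lle Pp Pm M0 M1 u2 g1)

lemma match2_swapL (Pp Pm : Finset ℕ) (M0 M1 : KModel) (u1 u2 : M0.W) (g1 g2 : M1.W)
    (h : Match2 Pp Pm M0 M1 u1 u2 g1 g2) : Match2 Pp Pm M0 M1 u2 u1 g1 g2 := by
  unfold Match2 at *; tauto

section Formulas

variable (Pp Pm : Finset ℕ) (M0 M1 : KModel) (ws : List M1.W)

/-- ρ(u1,u2) := □(θu1 ∨ θu2) ∧ ◇θu1 ∧ ◇θu2 -/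
noncomputable def rhoF (u1 u2 : M0.W) : ModalForm :=
  .and (.box (.or (theta Pp Pm M0 M1 ws u1) (theta Pp Pm M0 M1 ws u2)))
    (.and (ModalForm.dia (theta Pp Pm M0 M1 ws u1)) (ModalForm.dia (theta Pp Pm M0 M1 ws u2)))

/-- ΨS(u1,u2) := θu1 ∧ ρ(u1,u2) -/
noncomputable def psiS (u1 u2 : M0.W) : ModalForm :=
  .and (theta Pp Pm M0 M1 ws u1) (rhoF Pp Pm M0 M1 ws u1 u2)

/-- ΨB(u1,u2) := θu1 ∧ ρ(u1,u2) ∧ □ρ(u1,u2) -/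
noncomputable def psiB (u1 u2 : M0.W) : ModalForm :=
  .and (psiS Pp Pm M0 M1 ws u1 u2) (.box (rhoF Pp Pm M0 M1 ws u1 u2))

/-- Ξ -/
noncomputable def xiF (a1 a2 b1 b2 x0 : M0.W) : ModalForm :=
  .box (.or (psiS Pp Pm M0 M1 ws a1 a2) (.or (psiS Pp Pm M0 M1 ws a2 a1)
    (.or (psiS Pp Pm M0 M1 ws b1 b2) (.or (psiS Pp Pm M0 M1 ws b2 b1)
      (.and (theta Pp Pm M0 M1 ws x0) (ModalForm.dia (psiS Pp Pm M0 M1 ws a1 a2)))))))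

lemma vpos_dia' (φ : ModalForm) : (ModalForm.dia φ).vpos = φ.vpos := by
  simp [ModalForm.dia, ModalForm.vpos, ModalForm.vneg]

lemma vneg_dia' (φ : ModalForm) : (ModalForm.dia φ).vneg = φ.vneg := by
  simp [ModalForm.dia, ModalForm.vpos, ModalForm.vneg]

lemma depth_dia' (φ : ModalForm) : (ModalForm.dia φ).depth = φ.depth + 1 := by
  simp [ModalForm.dia, ModalForm.depth]

lemma vpos_rhoF (u1 u2 : M0.W) : (rhoF Pp Pm M0 M1 ws u1 u2).vpos ⊆ Pp := by
  simp [rhoF, ModalForm.vpos, ModalForm.vneg, Finset.union_subset_iff, vpos_theta, vneg_theta, vpos_dia', vneg_dia']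

lemma vneg_rhoF (u1 u2 : M0.W) : (rhoF Pp Pm M0 M1 ws u1 u2).vneg ⊆ Pm := by
  simp [rhoF, ModalForm.vpos, ModalForm.vneg, Finset.union_subset_iff, vpos_theta, vneg_theta, vpos_dia', vneg_dia']

lemma depth_rhoF (u1 u2 : M0.W) : (rhoF Pp Pm M0 M1 ws u1 u2).depth = 1 := by
  simp [rhoF, ModalForm.dia, ModalForm.depth, depth_theta]

lemma vpos_psiS (u1 u2 : M0.W) : (psiS Pp Pm M0 M1 ws u1 u2).vpos ⊆ Pp := by
  simp [psiS, rhoF, ModalForm.vpos, ModalForm.vneg, Finset.union_subset_iff, vpos_theta, vneg_theta, vpos_dia', vneg_dia']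

lemma vneg_psiS (u1 u2 : M0.W) : (psiS Pp Pm M0 M1 ws u1 u2).vneg ⊆ Pm := by
  simp [psiS, rhoF, ModalForm.vpos, ModalForm.vneg, Finset.union_subset_iff, vpos_theta, vneg_theta, vpos_dia', vneg_dia']

lemma depth_psiS (u1 u2 : M0.W) : (psiS Pp Pm M0 M1 ws u1 u2).depth = 1 := by
  simp [psiS, rhoF, ModalForm.dia, ModalForm.depth, depth_theta]

lemma vpos_psiB (u1 u2 : M0.W) : (psiB Pp Pm M0 M1 ws u1 u2).vpos ⊆ Pp := by
  simp [psiB, psiS, rhoF, ModalForm.vpos, ModalForm.vneg, Finset.union_subset_iff, vpos_theta, vneg_theta, vpos_dia', vneg_dia']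

lemma vneg_psiB (u1 u2 : M0.W) : (psiB Pp Pm M0 M1 ws u1 u2).vneg ⊆ Pm := by
  simp [psiB, psiS, rhoF, ModalForm.vpos, ModalForm.vneg, Finset.union_subset_iff, vpos_theta, vneg_theta, vpos_dia', vneg_dia']

lemma depth_psiB (u1 u2 : M0.W) : (psiB Pp Pm M0 M1 ws u1 u2).depth = 2 := by
  simp [psiB, psiS, rhoF, ModalForm.dia, ModalForm.depth, depth_theta]

lemma vpos_xiF (a1 a2 b1 b2 x0 : M0.W) : (xiF Pp Pm M0 M1 ws a1 a2 b1 b2 x0).vpos ⊆ Pp := by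
  simp [xiF, psiS, rhoF, ModalForm.vpos, ModalForm.vneg, Finset.union_subset_iff, vpos_theta, vneg_theta, vpos_dia', vneg_dia']

lemma vneg_xiF (a1 a2 b1 b2 x0 : M0.W) : (xiF Pp Pm M0 M1 ws a1 a2 b1 b2 x0).vneg ⊆ Pm := by
  simp [xiF, psiS, rhoF, ModalForm.vpos, ModalForm.vneg, Finset.union_subset_iff, vpos_theta, vneg_theta, vpos_dia', vneg_dia']

lemma depth_xiF (a1 a2 b1 b2 x0 : M0.W) : (xiF Pp Pm M0 M1 ws a1 a2 b1 b2 x0).depth = 3 := by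
  simp [xiF, psiS, rhoF, ModalForm.dia, ModalForm.depth, depth_theta]

lemma sat_dia_intro (M : KModel) (w y : M.W) (φ : ModalForm) (h : M.R w y) (hs : M.Sat y φ) :
    M.Sat w (ModalForm.dia φ) := fun hall => hall y h hs

lemma sat_dia_elim (M : KModel) (w : M.W) (φ : ModalForm) (h : M.Sat w (ModalForm.dia φ)) :
    ∃ y, M.R w y ∧ M.Sat y φ := by
  by_contra hc
  push_neg at hc
  exact h fun y hy hs => hc y hy hs

/-- satisfaction of ρ at suitable M0 worlds -/
lemma sat_rhoF_at (u1 u2 y : M0.W) (h1 : M0.R y u1) (h2 : M0.R y u2)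
    (hs : ∀ w, M0.R y w → w = u1 ∨ w = u2) : M0.Sat y (rhoF Pp Pm M0 M1 ws u1 u2) := by
  refine ⟨?_, ?_, ?_⟩
  · intro z hz
    rcases hs z hz with rfl | rfl
    · exact Or.inl (sat_theta_self Pp Pm M0 M1 ws z)
    · exact Or.inr (sat_theta_self Pp Pm M0 M1 ws z)
  · exact sat_dia_intro _ _ _ _ h1 (sat_theta_self Pp Pm M0 M1 ws u1)
  · exact sat_dia_intro _ _ _ _ h2 (sat_theta_self Pp Pm M0 M1 ws u2)

lemma sat_psiS_self (u1 u2 : M0.W) (h : ClFacts M0 u1 u2) :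
    M0.Sat u1 (psiS Pp Pm M0 M1 ws u1 u2) := by
  obtain ⟨h12, h21, s1, s2⟩ := h
  exact ⟨sat_theta_self Pp Pm M0 M1 ws u1, sat_rhoF_at _ _ _ _ _ _ _ _ (M0.refl u1) h12 s1⟩

lemma sat_psiB_self (u1 u2 : M0.W) (h : ClFacts M0 u1 u2) :
    M0.Sat u1 (psiB Pp Pm M0 M1 ws u1 u2) := by
  refine ⟨sat_psiS_self Pp Pm M0 M1 ws u1 u2 h, ?_⟩
  obtain ⟨h12, h21, s1, s2⟩ := h
  intro y hy
  rcases s1 y hy with rfl | rfl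
  · exact sat_rhoF_at _ _ _ _ _ _ _ _ (M0.refl y) h12 s1
  · exact sat_rhoF_at _ _ _ _ _ _ _ _ h21 (M0.refl y) s2

/-- extracting ρ-information on the M1 side -/
lemma ex_rhoF (hws : ∀ v : M1.W, v ∈ ws) (u1 u2 : M0.W) (v : M1.W)
    (h : M1.Sat v (rhoF Pp Pm M0 M1 ws u1 u2)) :
    (∀ y, M1.R v y → Lle Pp Pm M0 M1 u1 y ∨ Lle Pp Pm M0 M1 u2 y) ∧
    (∃ y, M1.R v y ∧ Lle Pp Pm M0 M1 u1 y) ∧ (∃ y, M1.R v y ∧ Lle Pp Pm M0 M1 u2 y) := by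
  obtain ⟨hbox, hd1, hd2⟩ :
      ((∀ y, M1.R v y → M1.Sat y (.or (theta Pp Pm M0 M1 ws u1) (theta Pp Pm M0 M1 ws u2))) ∧
       M1.Sat v (ModalForm.dia (theta Pp Pm M0 M1 ws u1)) ∧
       M1.Sat v (ModalForm.dia (theta Pp Pm M0 M1 ws u2))) := h
  refine ⟨fun y hy => ?_, ?_, ?_⟩
  · rcases (hbox y hy : M1.Sat y _ ∨ M1.Sat y _) with hh | hh
    · exact Or.inl (lle_of_sat_theta Pp Pm M0 M1 ws _ _ (hws y) hh)
    · exact Or.inr (lle_of_sat_theta Pp Pm M0 M1 ws _ _ (hws y) hh)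
  · obtain ⟨y, hy, hs⟩ := sat_dia_elim _ _ _ hd1
    exact ⟨y, hy, lle_of_sat_theta Pp Pm M0 M1 ws _ _ (hws y) hs⟩
  · obtain ⟨y, hy, hs⟩ := sat_dia_elim _ _ _ hd2
    exact ⟨y, hy, lle_of_sat_theta Pp Pm M0 M1 ws _ _ (hws y) hs⟩

/-- the key matching extraction: ρ(u1,u2) at a world of a 2-cluster yields a
pointwise matching onto that cluster -/
lemma match2_of_rhoF (hws : ∀ v : M1.W, v ∈ ws) (u1 u2 : M0.W) (g1 g2 y : M1.W)
    (hy : y = g1 ∨ y = g2) (hcl : ClFacts M1 g1 g2)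
    (hsat : M1.Sat y (rhoF Pp Pm M0 M1 ws u1 u2)) : Match2 Pp Pm M0 M1 u1 u2 g1 g2 := by
  obtain ⟨c12, c21, s1, s2⟩ := hcl
  obtain ⟨hbox, ⟨y1, hy1, hl1⟩, ⟨y2, hy2, hl2⟩⟩ := ex_rhoF Pp Pm M0 M1 ws hws u1 u2 y hsat
  have hyg1 : M1.R y g1 := by rcases hy with rfl | rfl; exacts [M1.refl y, c21]
  have hyg2 : M1.R y g2 := by rcases hy with rfl | rfl; exacts [c12, M1.refl y]
  have hsy : ∀ w, M1.R y w → w = g1 ∨ w = g2 := by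
    rcases hy with rfl | rfl; exacts [s1, s2]
  have h1 : Lle Pp Pm M0 M1 u1 g1 ∨ Lle Pp Pm M0 M1 u1 g2 := by
    rcases hsy y1 hy1 with rfl | rfl; exacts [Or.inl hl1, Or.inr hl1]
  have h2 : Lle Pp Pm M0 M1 u2 g1 ∨ Lle Pp Pm M0 M1 u2 g2 := by
    rcases hsy y2 hy2 with rfl | rfl; exacts [Or.inl hl2, Or.inr hl2]
  exact two_two h1 h2 (hbox g1 hyg1) (hbox g2 hyg2)

/-- extracting ΨB on the M1 side -/
lemma ex_psiB (u1 u2 : M0.W) (v : M1.W) (h : M1.Sat v (psiB Pp Pm M0 M1 ws u1 u2)) :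
    M1.Sat v (theta Pp Pm M0 M1 ws u1) ∧ M1.Sat v (rhoF Pp Pm M0 M1 ws u1 u2) ∧
      ∀ y, M1.R v y → M1.Sat y (rhoF Pp Pm M0 M1 ws u1 u2) := by
  obtain ⟨⟨h1, h2⟩, h3⟩ :
    ((M1.Sat v (theta Pp Pm M0 M1 ws u1) ∧ M1.Sat v (rhoF Pp Pm M0 M1 ws u1 u2)) ∧
      ∀ y, M1.R v y → M1.Sat y (rhoF Pp Pm M0 M1 ws u1 u2)) := h
  exact ⟨h1, h2, h3⟩

/-- extracting ΨS on the M1 side -/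
lemma ex_psiS (u1 u2 : M0.W) (v : M1.W) (h : M1.Sat v (psiS Pp Pm M0 M1 ws u1 u2)) :
    M1.Sat v (theta Pp Pm M0 M1 ws u1) ∧ M1.Sat v (rhoF Pp Pm M0 M1 ws u1 u2) := h

end Formulas
/-- derive cluster facts from the structure of a model in the class -/
lemma clFacts_of (M : KModel) (x : M.W) (C0 C1 : Set M.W) (hx : x ∉ C0)
    (hdis : Disjoint C0 C1)
    (hR : ∀ u v : M.W, M.R u v ↔ (u = v ∨ (u ∈ C0 ∧ v ∈ C0) ∨ (u ∈ C1 ∧ v ∈ C1) ∨ u = x))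
    (e1 e2 : M.W) (h1 : e1 ∈ C0) (h2 : e2 ∈ C0) (hC : ∀ w ∈ C0, w = e1 ∨ w = e2) :
    ClFacts M e1 e2 := by
  have hnx : ∀ e ∈ C0, e ≠ x := fun e he heq => hx (heq ▸ he)
  have hn1 : ∀ e ∈ C0, e ∉ C1 := fun e he he1 => (Set.disjoint_left.mp hdis he) he1
  refine ⟨(hR e1 e2).2 (.inr (.inl ⟨h1, h2⟩)), (hR e2 e1).2 (.inr (.inl ⟨h2, h1⟩)), ?_, ?_⟩
  · intro w hw
    rcases (hR e1 w).1 hw with rfl | ⟨_, hw0⟩ | ⟨h1', _⟩ | h1'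
    · exact .inl rfl
    · exact hC w hw0
    · exact absurd h1' (hn1 e1 h1)
    · exact absurd h1' (hnx e1 h1)
  · intro w hw
    rcases (hR e2 w).1 hw with rfl | ⟨_, hw0⟩ | ⟨h1', _⟩ | h1'
    · exact .inr rfl
    · exact hC w hw0
    · exact absurd h1' (hn1 e2 h2)
    · exact absurd h1' (hnx e2 h2)

/-- Satisfaction of Ξ at the root. -/
lemma sat_xiF_self (Pp Pm : Finset ℕ) (M0 M1 : KModel) (ws : List M1.W)
    (a1 a2 b1 b2 x0 : M0.W) (clA : ClFacts M0 a1 a2) (clB : ClFacts M0 b1 b2)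
    (hx : ∀ w, M0.R x0 w)
    (hcov : ∀ w : M0.W, w = x0 ∨ w = a1 ∨ w = a2 ∨ w = b1 ∨ w = b2) :
    M0.Sat x0 (xiF Pp Pm M0 M1 ws a1 a2 b1 b2 x0) := by
  intro y _
  rcases hcov y with rfl | rfl | rfl | rfl | rfl
  · exact Or.inr (Or.inr (Or.inr (Or.inr ⟨sat_theta_self Pp Pm M0 M1 ws y,
      sat_dia_intro _ _ _ _ (hx a1) (sat_psiS_self Pp Pm M0 M1 ws a1 a2 clA)⟩)))
  · exact Or.inl (sat_psiS_self Pp Pm M0 M1 ws y a2 clA)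
  · exact Or.inr (Or.inl (sat_psiS_self Pp Pm M0 M1 ws y a1 (clFacts_swap _ _ _ clA)))
  · exact Or.inr (Or.inr (Or.inl (sat_psiS_self Pp Pm M0 M1 ws y b2 clB)))
  · exact Or.inr (Or.inr (Or.inr (Or.inl
      (sat_psiS_self Pp Pm M0 M1 ws y b1 (clFacts_swap _ _ _ clB)))))

/-- Extraction from Ξ at a final world of M1. -/
lemma ex_xiF (Pp Pm : Finset ℕ) (M0 M1 : KModel) (ws : List M1.W)
    (hws : ∀ v : M1.W, v ∈ ws) (a1 a2 b1 b2 x0 : M0.W) (g1 g2 v : M1.W)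
    (hv : M1.Sat v (xiF Pp Pm M0 M1 ws a1 a2 b1 b2 x0))
    (clG : ClFacts M1 g1 g2) (hvg : M1.R v g1) :
    Match2 Pp Pm M0 M1 a1 a2 g1 g2 ∨ Match2 Pp Pm M0 M1 b1 b2 g1 g2 := by
  have h : (M1.Sat g1 (psiS Pp Pm M0 M1 ws a1 a2) ∨
      (M1.Sat g1 (psiS Pp Pm M0 M1 ws a2 a1) ∨
      (M1.Sat g1 (psiS Pp Pm M0 M1 ws b1 b2) ∨
      (M1.Sat g1 (psiS Pp Pm M0 M1 ws b2 b1) ∨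
      (M1.Sat g1 (theta Pp Pm M0 M1 ws x0) ∧
        M1.Sat g1 (ModalForm.dia (psiS Pp Pm M0 M1 ws a1 a2))))))) := hv g1 hvg
  rcases h with h | h | h | h | ⟨_, hdia⟩
  · exact Or.inl (match2_of_rhoF Pp Pm M0 M1 ws hws a1 a2 g1 g2 g1 (Or.inl rfl) clG
      (ex_psiS Pp Pm M0 M1 ws a1 a2 g1 h).2)
  · exact Or.inl (match2_swapL _ _ _ _ _ _ _ _
      (match2_of_rhoF Pp Pm M0 M1 ws hws a2 a1 g1 g2 g1 (Or.inl rfl) clG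
        (ex_psiS Pp Pm M0 M1 ws a2 a1 g1 h).2))
  · exact Or.inr (match2_of_rhoF Pp Pm M0 M1 ws hws b1 b2 g1 g2 g1 (Or.inl rfl) clG
      (ex_psiS Pp Pm M0 M1 ws b1 b2 g1 h).2)
  · exact Or.inr (match2_swapL _ _ _ _ _ _ _ _
      (match2_of_rhoF Pp Pm M0 M1 ws hws b2 b1 g1 g2 g1 (Or.inl rfl) clG
        (ex_psiS Pp Pm M0 M1 ws b2 b1 g1 h).2))
  · obtain ⟨y, hy, hpsiS⟩ := sat_dia_elim _ _ _ hdia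
    exact Or.inl (match2_of_rhoF Pp Pm M0 M1 ws hws a1 a2 g1 g2 y (clG.2.2.1 y hy) clG
      (ex_psiS Pp Pm M0 M1 ws a1 a2 y hpsiS).2)

/-- assembling the final existential statement -/
lemma build_goal (Pp Pm : Finset ℕ) (M0 M1 : KModel) (w0 : M0.W) (w1 : M1.W)
    (p1 p2 q1 q2 : M0.W) (v1 v2 v3 v4 : M1.W)
    (hr0 : RootFacts M0 w0 p1 p2 q1 q2) (hc0 : ClFacts M0 p1 p2) (hc0' : ClFacts M0 q1 q2)
    (hr1 : RootFacts M1 w1 v1 v2 v3 v4) (hc1 : ClFacts M1 v1 v2) (hc1' : ClFacts M1 v3 v4)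
    (l0 : Lle Pp Pm M0 M1 w0 w1) (l1 : Lle Pp Pm M0 M1 p1 v1) (l2 : Lle Pp Pm M0 M1 p2 v2)
    (l3 : Lle Pp Pm M0 M1 q1 v3) (l4 : Lle Pp Pm M0 M1 q2 v4) :
    ∃ (F : KFrame) (wstar : F.W) (f0 : F.W → M0.W) (f1 : F.W → M1.W),
      (∀ V : F.W → ℕ → Prop, F.toModel V ∈ C_LV21) ∧
      PMorphism F M0.toKFrame f0 ∧
      PMorphism F M1.toKFrame f1 ∧
      f0 wstar = w0 ∧ f1 wstar = w1 ∧
      ∀ x : F.W, ModalArrow Pp Pm 0 M0 (f0 x) M1 (f1 x) := by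
  refine ⟨F5, (0 : Fin 5), vec5 w0 p1 p2 q1 q2, vec5 w1 v1 v2 v3 v4, F5_mem,
    pmorph5 M0 w0 p1 p2 q1 q2 hr0 hc0 hc0', pmorph5 M1 w1 v1 v2 v3 v4 hr1 hc1 hc1',
    rfl, rfl, ?_⟩
  intro i
  fin_cases i
  · exact modalArrow_of_lle _ _ _ _ _ _ l0
  · exact modalArrow_of_lle _ _ _ _ _ _ l1
  · exact modalArrow_of_lle _ _ _ _ _ _ l2
  · exact modalArrow_of_lle _ _ _ _ _ _ l3
  · exact modalArrow_of_lle _ _ _ _ _ _ l4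

lemma rootFacts_swap1 (M : KModel) (r p1 p2 q1 q2 : M.W) (h : RootFacts M r p1 p2 q1 q2) :
    RootFacts M r p2 p1 q1 q2 := by
  obtain ⟨h1, h2, h3, h4, h5⟩ := h
  exact ⟨h2, h1, h3, h4, fun w hw => by rcases h5 w hw with h | h | h | h | h <;> tauto⟩

lemma rootFacts_swap2 (M : KModel) (r p1 p2 q1 q2 : M.W) (h : RootFacts M r p1 p2 q1 q2) :
    RootFacts M r p1 p2 q2 q1 := by
  obtain ⟨h1, h2, h3, h4, h5⟩ := h
  exact ⟨h1, h2, h4, h3, fun w hw => by rcases h5 w hw with h | h | h | h | h <;> tauto⟩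

lemma rootFacts_swapB (M : KModel) (r p1 p2 q1 q2 : M.W) (h : RootFacts M r p1 p2 q1 q2) :
    RootFacts M r q1 q2 p1 p2 := by
  obtain ⟨h1, h2, h3, h4, h5⟩ := h
  exact ⟨h3, h4, h1, h2, fun w hw => by rcases h5 w hw with h | h | h | h | h <;> tauto⟩
theorem stmt13 : EnjoysIP C_LV21 3 := by
  intro Pp Pm M0 M1 hM0 hM1 w0 w1 harrow
  obtain ⟨x0, C0, C1, hx0C0, hx0C1, hdis0, ⟨a1, a2, ha12, rfl⟩, ⟨b1, b2, hb12, rfl⟩,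
    hcov0, hR0⟩ := hM0
  obtain ⟨x1, D0, D1, hx1D0, hx1D1, hdis1, ⟨c1, c2, hc12, rfl⟩, ⟨d1, d2, hd12, rfl⟩,
    hcov1, hR1⟩ := hM1
  have hcov0' : ∀ w : M0.W, w = x0 ∨ w = a1 ∨ w = a2 ∨ w = b1 ∨ w = b2 := by
    intro w
    rcases hcov0 w with h | h | h
    · exact Or.inl h
    · simp only [Set.mem_insert_iff, Set.mem_singleton_iff] at h; tauto
    · simp only [Set.mem_insert_iff, Set.mem_singleton_iff] at h; tauto
  have hcov1' : ∀ w : M1.W, w = x1 ∨ w = c1 ∨ w = c2 ∨ w = d1 ∨ w = d2 := by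
    intro w
    rcases hcov1 w with h | h | h
    · exact Or.inl h
    · simp only [Set.mem_insert_iff, Set.mem_singleton_iff] at h; tauto
    · simp only [Set.mem_insert_iff, Set.mem_singleton_iff] at h; tauto
  have hx0R : ∀ w : M0.W, M0.R x0 w := fun w => (hR0 x0 w).2 (.inr (.inr (.inr rfl)))
  have hx1R : ∀ w : M1.W, M1.R x1 w := fun w => (hR1 x1 w).2 (.inr (.inr (.inr rfl)))
  have clA : ClFacts M0 a1 a2 :=
    clFacts_of M0 x0 _ _ hx0C0 hdis0 hR0 a1 a2 (by simp) (by simp)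
      (by intro w hw; simpa using hw)
  have clB : ClFacts M0 b1 b2 :=
    clFacts_of M0 x0 _ _ hx0C1 hdis0.symm
      (by intro u v; rw [hR0 u v]; tauto) b1 b2 (by simp) (by simp)
      (by intro w hw; simpa using hw)
  have clC : ClFacts M1 c1 c2 :=
    clFacts_of M1 x1 _ _ hx1D0 hdis1 hR1 c1 c2 (by simp) (by simp)
      (by intro w hw; simpa using hw)
  have clD : ClFacts M1 d1 d2 :=
    clFacts_of M1 x1 _ _ hx1D1 hdis1.symm
      (by intro u v; rw [hR1 u v]; tauto) d1 d2 (by simp) (by simp)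
      (by intro w hw; simpa using hw)
  obtain ⟨ws1, hws1⟩ : ∃ l : List M1.W, ∀ v : M1.W, v ∈ l :=
    ⟨[x1, c1, c2, d1, d2], by
      intro v; rcases hcov1' v with rfl | rfl | rfl | rfl | rfl <;> simp⟩
  have push : ∀ φ : ModalForm, φ.vpos ⊆ Pp → φ.vneg ⊆ Pm → φ.depth ≤ 3 →
      M0.Sat w0 φ → M1.Sat w1 φ := harrow
  have hT1 : Lle Pp Pm M0 M1 w0 w1 :=
    lle_of_sat_theta Pp Pm M0 M1 ws1 w0 w1 (hws1 w1)
      (push (theta Pp Pm M0 M1 ws1 w0) (vpos_theta _ _ _ _ _ _) (vneg_theta _ _ _ _ _ _)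
        (by simp [depth_theta]) (sat_theta_self _ _ _ _ _ _))
  -- the handler for final w0
  have caseFinal : ∀ e2 : M0.W, ClFacts M0 w0 e2 →
      ∃ (F : KFrame) (wstar : F.W) (f0 : F.W → M0.W) (f1 : F.W → M1.W),
        (∀ V : F.W → ℕ → Prop, F.toModel V ∈ C_LV21) ∧
        PMorphism F M0.toKFrame f0 ∧
        PMorphism F M1.toKFrame f1 ∧
        f0 wstar = w0 ∧ f1 wstar = w1 ∧
        ∀ x : F.W, ModalArrow Pp Pm 0 M0 (f0 x) M1 (f1 x) := by
    intro e2 cl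
    have hsat := push (psiB Pp Pm M0 M1 ws1 w0 e2) (vpos_psiB _ _ _ _ _ _ _)
      (vneg_psiB _ _ _ _ _ _ _) (by simp [depth_psiB])
      (sat_psiB_self Pp Pm M0 M1 ws1 w0 e2 cl)
    obtain ⟨hth, hrho, hbox⟩ := ex_psiB Pp Pm M0 M1 ws1 w0 e2 w1 hsat
    obtain ⟨c12, c21, sc1, sc2⟩ := cl
    have cl' : ClFacts M0 w0 e2 := ⟨c12, c21, sc1, sc2⟩
    have clsw : ClFacts M0 e2 w0 := clFacts_swap _ _ _ cl'
    have rfE : ∀ s1 s2 s3 s4 : M0.W,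
        ((s1 = w0 ∧ s2 = e2) ∨ (s1 = e2 ∧ s2 = w0)) →
        ((s3 = w0 ∧ s4 = e2) ∨ (s3 = e2 ∧ s4 = w0)) → RootFacts M0 w0 s1 s2 s3 s4 := by
      intro s1 s2 s3 s4 hp hq
      have hcl : ∀ s : M0.W, s = w0 ∨ s = e2 → M0.R w0 s := by
        rintro s (rfl | rfl); exacts [M0.refl s, c12]
      refine ⟨hcl s1 (hp.imp And.left And.left), hcl s2 ((hp.imp And.right And.right).symm),
        hcl s3 (hq.imp And.left And.left), hcl s4 ((hq.imp And.right And.right).symm),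
        fun w hw => ?_⟩
      rcases sc1 w hw with rfl | rfl
      · exact Or.inl rfl
      · rcases hp with ⟨_, h2⟩ | ⟨h1, _⟩
        · exact Or.inr (Or.inr (Or.inl h2.symm))
        · exact Or.inr (Or.inl h1.symm)
    -- handler for final w1
    have ff : ∀ g2 : M1.W, ClFacts M1 w1 g2 →
        ∃ (F : KFrame) (wstar : F.W) (f0 : F.W → M0.W) (f1 : F.W → M1.W),
          (∀ V : F.W → ℕ → Prop, F.toModel V ∈ C_LV21) ∧
          PMorphism F M0.toKFrame f0 ∧
          PMorphism F M1.toKFrame f1 ∧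
          f0 wstar = w0 ∧ f1 wstar = w1 ∧
          ∀ x : F.W, ModalArrow Pp Pm 0 M0 (f0 x) M1 (f1 x) := by
      intro g2 clG
      have MG : Match2 Pp Pm M0 M1 w0 e2 w1 g2 :=
        match2_of_rhoF Pp Pm M0 M1 ws1 hws1 w0 e2 w1 g2 w1 (Or.inl rfl) clG hrho
      obtain ⟨g12, g21, sg1, sg2⟩ := clG
      have clG' : ClFacts M1 w1 g2 := ⟨g12, g21, sg1, sg2⟩
      have rfG : RootFacts M1 w1 w1 g2 w1 g2 :=
        ⟨M1.refl _, g12, M1.refl _, g12, fun w hw => by rcases sg1 w hw with rfl | rfl <;> tauto⟩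
      have rfG' : RootFacts M1 w1 g2 w1 g2 w1 :=
        ⟨g12, M1.refl _, g12, M1.refl _, fun w hw => by rcases sg1 w hw with rfl | rfl <;> tauto⟩
      rcases MG with ⟨l1, l2⟩ | ⟨l1, l2⟩
      · exact build_goal Pp Pm M0 M1 w0 w1 w0 e2 w0 e2 w1 g2 w1 g2
          (rfE _ _ _ _ (Or.inl ⟨rfl, rfl⟩) (Or.inl ⟨rfl, rfl⟩)) cl' cl' rfG clG' clG' hT1 l1 l2 l1 l2
      · exact build_goal Pp Pm M0 M1 w0 w1 w0 e2 w0 e2 g2 w1 g2 w1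
          (rfE _ _ _ _ (Or.inl ⟨rfl, rfl⟩) (Or.inl ⟨rfl, rfl⟩)) cl' cl' rfG' (clFacts_swap _ _ _ clG')
          (clFacts_swap _ _ _ clG') hT1 l1 l2 l1 l2
    rcases hcov1' w1 with rfl | hw1 | hw1 | hw1 | hw1
    · -- w1 = x1 : case (b)
      have MC : Match2 Pp Pm M0 M1 w0 e2 c1 c2 :=
        match2_of_rhoF Pp Pm M0 M1 ws1 hws1 w0 e2 c1 c2 c1 (Or.inl rfl) clC
          (hbox c1 (hx1R c1))
      have MD : Match2 Pp Pm M0 M1 w0 e2 d1 d2 :=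
        match2_of_rhoF Pp Pm M0 M1 ws1 hws1 w0 e2 d1 d2 d1 (Or.inl rfl) clD
          (hbox d1 (hx1R d1))
      have rf1 : RootFacts M1 w1 c1 c2 d1 d2 :=
        ⟨hx1R _, hx1R _, hx1R _, hx1R _, fun w _ => hcov1' w⟩
      rcases MC with ⟨l1, l2⟩ | ⟨l1, l2⟩ <;> rcases MD with ⟨l3, l4⟩ | ⟨l3, l4⟩
      · exact build_goal Pp Pm M0 M1 w0 w1 w0 e2 w0 e2 c1 c2 d1 d2
          (rfE _ _ _ _ (Or.inl ⟨rfl, rfl⟩) (Or.inl ⟨rfl, rfl⟩)) cl' cl' rf1 clC clD hT1 l1 l2 l3 l4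
      · exact build_goal Pp Pm M0 M1 w0 w1 w0 e2 w0 e2 c1 c2 d2 d1
          (rfE _ _ _ _ (Or.inl ⟨rfl, rfl⟩) (Or.inl ⟨rfl, rfl⟩)) cl' cl'
          (rootFacts_swap2 _ _ _ _ _ _ rf1) clC (clFacts_swap _ _ _ clD) hT1 l1 l2 l3 l4
      · exact build_goal Pp Pm M0 M1 w0 w1 w0 e2 w0 e2 c2 c1 d1 d2
          (rfE _ _ _ _ (Or.inl ⟨rfl, rfl⟩) (Or.inl ⟨rfl, rfl⟩)) cl' cl'
          (rootFacts_swap1 _ _ _ _ _ _ rf1) (clFacts_swap _ _ _ clC) clD hT1 l1 l2 l3 l4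
      · exact build_goal Pp Pm M0 M1 w0 w1 w0 e2 w0 e2 c2 c1 d2 d1
          (rfE _ _ _ _ (Or.inl ⟨rfl, rfl⟩) (Or.inl ⟨rfl, rfl⟩)) cl' cl'
          (rootFacts_swap1 _ _ _ _ _ _ (rootFacts_swap2 _ _ _ _ _ _ rf1))
          (clFacts_swap _ _ _ clC) (clFacts_swap _ _ _ clD) hT1 l1 l2 l3 l4
    · exact hw1 ▸ ff c2 (hw1 ▸ clC)
    · exact hw1 ▸ ff c1 (hw1 ▸ clFacts_swap _ _ _ clC)
    · exact hw1 ▸ ff d2 (hw1 ▸ clD)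
    · exact hw1 ▸ ff d1 (hw1 ▸ clFacts_swap _ _ _ clD)
  rcases hcov0' w0 with hw0 | hw0 | hw0 | hw0 | hw0
  case _ =>
    subst hw0
    have rf0 : RootFacts M0 w0 a1 a2 b1 b2 :=
      ⟨hx0R _, hx0R _, hx0R _, hx0R _, fun w _ => hcov0' w⟩
    have hPA := push (ModalForm.dia (psiB Pp Pm M0 M1 ws1 a1 a2))
      (by rw [vpos_dia']; exact vpos_psiB _ _ _ _ _ _ _)
      (by rw [vneg_dia']; exact vneg_psiB _ _ _ _ _ _ _)
      (by simp [depth_dia', depth_psiB])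
      (sat_dia_intro _ _ _ _ (hx0R a1) (sat_psiB_self Pp Pm M0 M1 ws1 a1 a2 clA))
    obtain ⟨vA, hvA, hpsiA⟩ := sat_dia_elim _ _ _ hPA
    obtain ⟨hthA, hrhoA, hboxA⟩ := ex_psiB Pp Pm M0 M1 ws1 a1 a2 vA hpsiA
    have hPB := push (ModalForm.dia (psiB Pp Pm M0 M1 ws1 b1 b2))
      (by rw [vpos_dia']; exact vpos_psiB _ _ _ _ _ _ _)
      (by rw [vneg_dia']; exact vneg_psiB _ _ _ _ _ _ _)
      (by simp [depth_dia', depth_psiB])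
      (sat_dia_intro _ _ _ _ (hx0R b1) (sat_psiB_self Pp Pm M0 M1 ws1 b1 b2 clB))
    obtain ⟨vB, hvB, hpsiB⟩ := sat_dia_elim _ _ _ hPB
    obtain ⟨hthB, hrhoB, hboxB⟩ := ex_psiB Pp Pm M0 M1 ws1 b1 b2 vB hpsiB
    -- handler for final w1
    have ff2 : ∀ g2 : M1.W, ClFacts M1 w1 g2 →
        ∃ (F : KFrame) (wstar : F.W) (f0 : F.W → M0.W) (f1 : F.W → M1.W),
          (∀ V : F.W → ℕ → Prop, F.toModel V ∈ C_LV21) ∧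
          PMorphism F M0.toKFrame f0 ∧
          PMorphism F M1.toKFrame f1 ∧
          f0 wstar = w0 ∧ f1 wstar = w1 ∧
          ∀ x : F.W, ModalArrow Pp Pm 0 M0 (f0 x) M1 (f1 x) := by
      intro g2 clG
      have MA : Match2 Pp Pm M0 M1 a1 a2 w1 g2 :=
        match2_of_rhoF Pp Pm M0 M1 ws1 hws1 a1 a2 w1 g2 vA (clG.2.2.1 vA hvA) clG hrhoA
      have MB : Match2 Pp Pm M0 M1 b1 b2 w1 g2 :=
        match2_of_rhoF Pp Pm M0 M1 ws1 hws1 b1 b2 w1 g2 vB (clG.2.2.1 vB hvB) clG hrhoB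
      obtain ⟨g12, g21, sg1, sg2⟩ := clG
      have clG' : ClFacts M1 w1 g2 := ⟨g12, g21, sg1, sg2⟩
      have rfG2 : ∀ s1 s2 s3 s4 : M1.W,
          ((s1 = w1 ∧ s2 = g2) ∨ (s1 = g2 ∧ s2 = w1)) →
          ((s3 = w1 ∧ s4 = g2) ∨ (s3 = g2 ∧ s4 = w1)) → RootFacts M1 w1 s1 s2 s3 s4 := by
        intro s1 s2 s3 s4 hp hq
        have hcl : ∀ s : M1.W, s = w1 ∨ s = g2 → M1.R w1 s := by
          rintro s (rfl | rfl); exacts [M1.refl s, g12]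
        refine ⟨hcl s1 (hp.imp And.left And.left), hcl s2 ((hp.imp And.right And.right).symm),
          hcl s3 (hq.imp And.left And.left), hcl s4 ((hq.imp And.right And.right).symm),
          fun w hw => ?_⟩
        rcases sg1 w hw with rfl | rfl
        · exact Or.inl rfl
        · rcases hp with ⟨_, h2⟩ | ⟨h1, _⟩
          · exact Or.inr (Or.inr (Or.inl h2.symm))
          · exact Or.inr (Or.inl h1.symm)
      rcases MA with ⟨l1, l2⟩ | ⟨l1, l2⟩ <;> rcases MB with ⟨l3, l4⟩ | ⟨l3, l4⟩
      · exact build_goal Pp Pm M0 M1 w0 w1 a1 a2 b1 b2 w1 g2 w1 g2 rf0 clA clB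
          (rfG2 _ _ _ _ (Or.inl ⟨rfl, rfl⟩) (Or.inl ⟨rfl, rfl⟩)) clG' clG' hT1 l1 l2 l3 l4
      · exact build_goal Pp Pm M0 M1 w0 w1 a1 a2 b1 b2 w1 g2 g2 w1 rf0 clA clB
          (rfG2 _ _ _ _ (Or.inl ⟨rfl, rfl⟩) (Or.inr ⟨rfl, rfl⟩)) clG' (clFacts_swap _ _ _ clG') hT1 l1 l2 l3 l4
      · exact build_goal Pp Pm M0 M1 w0 w1 a1 a2 b1 b2 g2 w1 w1 g2 rf0 clA clB
          (rfG2 _ _ _ _ (Or.inr ⟨rfl, rfl⟩) (Or.inl ⟨rfl, rfl⟩)) (clFacts_swap _ _ _ clG') clG' hT1 l1 l2 l3 l4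
      · exact build_goal Pp Pm M0 M1 w0 w1 a1 a2 b1 b2 g2 w1 g2 w1 rf0 clA clB
          (rfG2 _ _ _ _ (Or.inr ⟨rfl, rfl⟩) (Or.inr ⟨rfl, rfl⟩)) (clFacts_swap _ _ _ clG')
          (clFacts_swap _ _ _ clG') hT1 l1 l2 l3 l4
    rcases hcov1' w1 with hw1 | hw1 | hw1 | hw1 | hw1
    case _ =>
      subst hw1
      have hA : Match2 Pp Pm M0 M1 a1 a2 c1 c2 ∨ Match2 Pp Pm M0 M1 a1 a2 d1 d2 := by
        rcases hcov1' vA with h | h | h | h | h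
        · exact Or.inl (match2_of_rhoF Pp Pm M0 M1 ws1 hws1 a1 a2 c1 c2 c1 (Or.inl rfl)
            clC (hboxA c1 (by rw [h]; exact hx1R c1)))
        · exact Or.inl (match2_of_rhoF Pp Pm M0 M1 ws1 hws1 a1 a2 c1 c2 vA (Or.inl h)
            clC hrhoA)
        · exact Or.inl (match2_of_rhoF Pp Pm M0 M1 ws1 hws1 a1 a2 c1 c2 vA (Or.inr h)
            clC hrhoA)
        · exact Or.inr (match2_of_rhoF Pp Pm M0 M1 ws1 hws1 a1 a2 d1 d2 vA (Or.inl h)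
            clD hrhoA)
        · exact Or.inr (match2_of_rhoF Pp Pm M0 M1 ws1 hws1 a1 a2 d1 d2 vA (Or.inr h)
            clD hrhoA)
      have hB : Match2 Pp Pm M0 M1 b1 b2 c1 c2 ∨ Match2 Pp Pm M0 M1 b1 b2 d1 d2 := by
        rcases hcov1' vB with h | h | h | h | h
        · exact Or.inl (match2_of_rhoF Pp Pm M0 M1 ws1 hws1 b1 b2 c1 c2 c1 (Or.inl rfl)
            clC (hboxB c1 (by rw [h]; exact hx1R c1)))
        · exact Or.inl (match2_of_rhoF Pp Pm M0 M1 ws1 hws1 b1 b2 c1 c2 vB (Or.inl h)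
            clC hrhoB)
        · exact Or.inl (match2_of_rhoF Pp Pm M0 M1 ws1 hws1 b1 b2 c1 c2 vB (Or.inr h)
            clC hrhoB)
        · exact Or.inr (match2_of_rhoF Pp Pm M0 M1 ws1 hws1 b1 b2 d1 d2 vB (Or.inl h)
            clD hrhoB)
        · exact Or.inr (match2_of_rhoF Pp Pm M0 M1 ws1 hws1 b1 b2 d1 d2 vB (Or.inr h)
            clD hrhoB)
      have hXi := push (xiF Pp Pm M0 M1 ws1 a1 a2 b1 b2 w0)
        (vpos_xiF _ _ _ _ _ _ _ _ _ _) (vneg_xiF _ _ _ _ _ _ _ _ _ _)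
        (by simp [depth_xiF])
        (sat_xiF_self Pp Pm M0 M1 ws1 a1 a2 b1 b2 w0 clA clB hx0R hcov0')
      have hC := ex_xiF Pp Pm M0 M1 ws1 hws1 a1 a2 b1 b2 w0 c1 c2 w1 hXi clC (hx1R c1)
      have hD := ex_xiF Pp Pm M0 M1 ws1 hws1 a1 a2 b1 b2 w0 d1 d2 w1 hXi clD (hx1R d1)
      have rf1 : RootFacts M1 w1 c1 c2 d1 d2 :=
        ⟨hx1R _, hx1R _, hx1R _, hx1R _, fun w _ => hcov1' w⟩
      rcases two_two hA hB hC hD with ⟨mAC, mBD⟩ | ⟨mAD, mBC⟩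
      · rcases mAC with ⟨l1, l2⟩ | ⟨l1, l2⟩ <;> rcases mBD with ⟨l3, l4⟩ | ⟨l3, l4⟩
        · exact build_goal Pp Pm M0 M1 w0 w1 a1 a2 b1 b2 c1 c2 d1 d2 rf0 clA clB
            rf1 clC clD hT1 l1 l2 l3 l4
        · exact build_goal Pp Pm M0 M1 w0 w1 a1 a2 b1 b2 c1 c2 d2 d1 rf0 clA clB
            (rootFacts_swap2 _ _ _ _ _ _ rf1) clC (clFacts_swap _ _ _ clD) hT1 l1 l2 l3 l4
        · exact build_goal Pp Pm M0 M1 w0 w1 a1 a2 b1 b2 c2 c1 d1 d2 rf0 clA clB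
            (rootFacts_swap1 _ _ _ _ _ _ rf1) (clFacts_swap _ _ _ clC) clD hT1 l1 l2 l3 l4
        · exact build_goal Pp Pm M0 M1 w0 w1 a1 a2 b1 b2 c2 c1 d2 d1 rf0 clA clB
            (rootFacts_swap1 _ _ _ _ _ _ (rootFacts_swap2 _ _ _ _ _ _ rf1)) (clFacts_swap _ _ _ clC) (clFacts_swap _ _ _ clD) hT1 l1 l2 l3 l4
      · rcases mAD with ⟨l1, l2⟩ | ⟨l1, l2⟩ <;> rcases mBC with ⟨l3, l4⟩ | ⟨l3, l4⟩
        · exact build_goal Pp Pm M0 M1 w0 w1 a1 a2 b1 b2 d1 d2 c1 c2 rf0 clA clB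
            (rootFacts_swapB _ _ _ _ _ _ rf1) clD clC hT1 l1 l2 l3 l4
        · exact build_goal Pp Pm M0 M1 w0 w1 a1 a2 b1 b2 d1 d2 c2 c1 rf0 clA clB
            (rootFacts_swap2 _ _ _ _ _ _ (rootFacts_swapB _ _ _ _ _ _ rf1)) clD (clFacts_swap _ _ _ clC) hT1 l1 l2 l3 l4
        · exact build_goal Pp Pm M0 M1 w0 w1 a1 a2 b1 b2 d2 d1 c1 c2 rf0 clA clB
            (rootFacts_swap1 _ _ _ _ _ _ (rootFacts_swapB _ _ _ _ _ _ rf1)) (clFacts_swap _ _ _ clD) clC hT1 l1 l2 l3 l4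
        · exact build_goal Pp Pm M0 M1 w0 w1 a1 a2 b1 b2 d2 d1 c2 c1 rf0 clA clB
            (rootFacts_swap1 _ _ _ _ _ _ (rootFacts_swap2 _ _ _ _ _ _ (rootFacts_swapB _ _ _ _ _ _ rf1))) (clFacts_swap _ _ _ clD) (clFacts_swap _ _ _ clC) hT1 l1 l2 l3 l4
    case _ => exact hw1 ▸ ff2 c2 (hw1 ▸ clC)
    case _ => exact hw1 ▸ ff2 c1 (hw1 ▸ clFacts_swap _ _ _ clC)
    case _ => exact hw1 ▸ ff2 d2 (hw1 ▸ clD)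
    case _ => exact hw1 ▸ ff2 d1 (hw1 ▸ clFacts_swap _ _ _ clD)
  case _ => exact caseFinal a2 (hw0 ▸ clA)
  case _ => exact caseFinal a1 (hw0 ▸ clFacts_swap _ _ _ clA)
  case _ => exact caseFinal b2 (hw0 ▸ clB)
  case _ => exact caseFinal b1 (hw0 ▸ clFacts_swap _ _ _ clB)
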